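/- Let G be a subgroup of GL_d(ℝ) and let C ⊆ ℝ^d be a compact connected set whose linear span is all of ℝ^d and which is contained in an affine chart: there is a linear functional φ : ℝ^d → ℝ with φ(v) = 1 for all v ∈ C. Suppose G preserves C projectively: for every g ∈ G, the set ℝ* · C = {t·v : t ∈ ℝ ∖ {0}, v ∈ C} satisfies g · (ℝ* · C) = ℝ* · C. Then G preserves a properly convex open domain in ℙ(ℝ^d): there exists a nonempty open convex cone Ω ⊆ ℝ^d with tΩ = Ω for all t > 0 and with Ω̄ ∩ (−Ω̄) = {0}, such that for every g ∈ G either g·Ω = Ω or g·Ω = −Ω. -/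

import Mathlib

open Matrix Pointwise

/-- The set of nonzero scalar multiples of elements of `C`. -/
def scalarSaturation {d : ℕ} (C : Set (Fin d → ℝ)) : Set (Fin d → ℝ) :=
  {w | ∃ t : ℝ, t ≠ 0 ∧ ∃ v ∈ C, w = t • v}

/-- **Remark (groups preserving a spanning compact connected set in an affine chart
preserve a properly convex domain).**
If a subgroup `G ≤ GL_d(ℝ)` projectively preserves a compact connected set `C` spanning
`ℝ^d` and contained in the affine chart `{φ = 1}`, then `G` preserves a properly convex open
cone, hence a properly convex domain in `ℙ(ℝ^d)`. -/
theorem preserves_properly_convex_domain_of_preserves_compact_connected_spanning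
    {d : ℕ} (G : Subgroup (GL (Fin d) ℝ))
    (C : Set (Fin d → ℝ)) (hCcpt : IsCompact C) (hCconn : IsConnected C)
    (hspan : Submodule.span ℝ C = ⊤)
    (φ : (Fin d → ℝ) →ₗ[ℝ] ℝ) (hchart : ∀ v ∈ C, φ v = 1)
    (hpres : ∀ g ∈ G,
      (fun v => (g : Matrix (Fin d) (Fin d) ℝ) *ᵥ v) '' scalarSaturation C =
        scalarSaturation C) :
    ∃ Ω : Set (Fin d → ℝ), Ω.Nonempty ∧ IsOpen Ω ∧ Convex ℝ Ω ∧
      (∀ t : ℝ, 0 < t → t • Ω = Ω) ∧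
      (closure Ω ∩ (-closure Ω) = {0}) ∧
      ∀ g ∈ G,
        ((fun v => (g : Matrix (Fin d) (Fin d) ℝ) *ᵥ v) '' Ω = Ω ∨
         (fun v => (g : Matrix (Fin d) (Fin d) ℝ) *ᵥ v) '' Ω = -Ω) := by
  classical
  obtain ⟨v₀, hv₀⟩ := hCconn.nonempty
  set cvx : Set (Fin d → ℝ) := convexHull ℝ C with hcvxdef
  have hcvx : Convex ℝ cvx := convex_convexHull ℝ C
  set K : Set (Fin d → ℝ) := ↑(Convex.toCone cvx hcvx) with hKdef
  have hKmem : ∀ x, x ∈ K ↔ ∃ t : ℝ, 0 < t ∧ ∃ v ∈ cvx, x = t • v := by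
    intro x
    constructor
    · intro hx
      rcases hcvx.mem_toCone.1 hx with ⟨c, hc, y, hy, rfl⟩
      exact ⟨c, hc, y, hy, rfl⟩
    · rintro ⟨t, ht, v, hv, rfl⟩
      exact hcvx.mem_toCone.2 ⟨t, ht, v, hv, rfl⟩
  have hKconv : Convex ℝ K := (Convex.toCone cvx hcvx).convex
  -- φ = 1 on the convex hull
  have hφcvx : ∀ v ∈ cvx, φ v = 1 := by
    intro v hv
    have : cvx ⊆ {w | φ w = 1} :=
      convexHull_min (fun w hw => hchart w hw) (convex_hyperplane φ.isLinear 1)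
    exact this hv
  -- bound on the convex hull
  obtain ⟨M, hM⟩ : ∃ M : ℝ, ∀ v ∈ cvx, ‖v‖ ≤ M := by
    have hb : Bornology.IsBounded cvx := isBounded_convexHull.2 hCcpt.isBounded
    exact isBounded_iff_forall_norm_le.1 hb
  -- basic facts about K
  have hφK : ∀ x ∈ K, 0 < φ x ∧ ‖x‖ ≤ M * φ x := by
    intro x hx
    obtain ⟨t, ht, v, hv, rfl⟩ := (hKmem x).1 hx
    have hφ : φ (t • v) = t := by rw [φ.map_smul, hφcvx v hv, smul_eq_mul, mul_one]
    constructor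
    · rw [hφ]; exact ht
    · rw [hφ, norm_smul, Real.norm_eq_abs, abs_of_pos ht, mul_comm]
      exact mul_le_mul_of_nonneg_right (hM v hv) ht.le
  have hCK : C ⊆ K := fun v hv =>
    (hKmem v).2 ⟨1, one_pos, v, subset_convexHull ℝ C hv, (one_smul ℝ v).symm⟩
  have hKsm : ∀ t : ℝ, 0 < t → ∀ x ∈ K, t • x ∈ K := fun t ht x hx =>
    (Convex.toCone cvx hcvx).smul_mem ht hx
  have hKsmul : ∀ t : ℝ, 0 < t → t • K = K := by
    intro t ht
    apply Set.Subset.antisymm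
    · rintro _ ⟨y, hy, rfl⟩; exact hKsm t ht y hy
    · intro x hx
      exact ⟨t⁻¹ • x, hKsm t⁻¹ (inv_pos.2 ht) x hx,
        by show t • t⁻¹ • x = x; rw [smul_smul, mul_inv_cancel₀ ht.ne', one_smul]⟩
  -- Ω
  set Ω : Set (Fin d → ℝ) := interior K with hΩdef
  have hΩopen : IsOpen Ω := isOpen_interior
  have hΩconv : Convex ℝ Ω := hKconv.interior
  -- nonempty
  have hΩne : Ω.Nonempty := by
    rw [hΩdef, hKconv.interior_nonempty_iff_affineSpan_eq_top,
      AffineSubspace.affineSpan_eq_top_iff_vectorSpan_eq_top_of_nonempty ℝ _ _ ⟨v₀, hCK hv₀⟩]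
    rw [← top_le_iff, ← hspan]
    apply Submodule.span_le.2
    intro v hv
    have h1 : v ∈ K := hCK hv
    have h2 : (2 : ℝ) • v ∈ K := hKsm 2 two_pos v h1
    have h3 : ((2 : ℝ) • v) -ᵥ v ∈ vectorSpan ℝ K := vsub_mem_vectorSpan ℝ h2 h1
    have h4 : ((2 : ℝ) • v) -ᵥ v = v := by
      show (2 : ℝ) • v - v = v
      rw [two_smul]; abel
    rwa [h4] at h3
  -- scaling invariance of Ω
  have hΩsmul : ∀ t : ℝ, 0 < t → t • Ω = Ω := by
    intro t ht
    rw [hΩdef, ← interior_smul₀ ht.ne' K, hKsmul t ht]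
  -- closure bound
  have hclosb : ∀ x ∈ closure K, ‖x‖ ≤ M * φ x := by
    intro x hx
    have hcl : IsClosed {y : Fin d → ℝ | ‖y‖ ≤ M * φ y} := by
      apply isClosed_le continuous_norm
      exact continuous_const.mul φ.continuous_of_finiteDimensional
    exact closure_minimal (fun y hy => (hφK y hy).2) hcl hx
  have h0cl : (0 : Fin d → ℝ) ∈ closure Ω := by
    obtain ⟨x₀, hx₀⟩ := hΩne
    have htend : Filter.Tendsto (fun n : ℕ => (1 / ((n : ℝ) + 1)) • x₀)
        Filter.atTop (nhds 0) := by
      have := (tendsto_one_div_add_atTop_nhds_zero_nat (𝕜 := ℝ)).smul_const x₀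
      simpa using this
    apply mem_closure_of_tendsto htend
    filter_upwards with n
    have hpos : (0 : ℝ) < 1 / ((n : ℝ) + 1) := by positivity
    rw [← hΩsmul _ hpos]
    exact Set.smul_mem_smul_set hx₀
  have hinter : closure Ω ∩ (-closure Ω) = {0} := by
    apply Set.Subset.antisymm
    · rintro x ⟨hx1, hx2⟩
      have hx2' : -x ∈ closure Ω := hx2
      have hsub : closure Ω ⊆ closure K := closure_mono interior_subset
      have b1 := hclosb x (hsub hx1)
      have b2 := hclosb (-x) (hsub hx2')
      rw [norm_neg, φ.map_neg, mul_neg] at b2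
      have hx0 : ‖x‖ ≤ 0 := by linarith
      have : x = 0 := norm_le_zero_iff.1 hx0
      simpa using this
    · intro x hx
      rw [Set.mem_singleton_iff] at hx
      subst hx
      refine ⟨h0cl, ?_⟩
      rw [Set.mem_neg, neg_zero]
      exact h0cl
  -- membership in the scalar saturation
  have hCS : C ⊆ scalarSaturation C := fun v hv =>
    ⟨1, one_ne_zero, v, hv, (one_smul ℝ v).symm⟩
  have hgS : ∀ g ∈ G, ∀ v ∈ C,
      ((g : Matrix (Fin d) (Fin d) ℝ) *ᵥ v) ∈ scalarSaturation C := by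
    intro g hg v hv
    have hmem : (g : Matrix (Fin d) (Fin d) ℝ) *ᵥ v ∈
        (fun v => (g : Matrix (Fin d) (Fin d) ℝ) *ᵥ v) '' scalarSaturation C :=
      ⟨v, hCS hv, rfl⟩
    rwa [hpres g hg] at hmem
  -- the key subset lemma
  have himgsub : ∀ Mx : Matrix (Fin d) (Fin d) ℝ,
      (∀ v ∈ C, Mx *ᵥ v ∈ scalarSaturation C) →
      (∀ v ∈ C, 0 < φ (Mx *ᵥ v)) → (fun v => Mx *ᵥ v) '' K ⊆ K := by
    intro Mx hMS hMpos
    have hMC : ∀ v ∈ C, Mx *ᵥ v ∈ K := by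
      intro v hv
      obtain ⟨t, ht0, w, hw, hEq⟩ := hMS v hv
      have hφt : φ (Mx *ᵥ v) = t := by
        rw [hEq, φ.map_smul, hchart w hw, smul_eq_mul, mul_one]
      have htpos : 0 < t := hφt ▸ hMpos v hv
      exact (hKmem _).2 ⟨t, htpos, w, subset_convexHull ℝ C hw, hEq⟩
    have hMcvx : ∀ v ∈ cvx, Mx *ᵥ v ∈ K := by
      intro v hv
      have himg : (fun v => Mx *ᵥ v) '' cvx ⊆ K := by
        have h1 : (fun v => Mx *ᵥ v) '' cvx =
            convexHull ℝ ((fun v => Mx *ᵥ v) '' C) := by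
          have := (Matrix.mulVecLin Mx).image_convexHull C
          exact this
        rw [h1]
        apply convexHull_min _ hKconv
        rintro _ ⟨w, hw, rfl⟩
        exact hMC w hw
      exact himg ⟨v, hv, rfl⟩
    rintro _ ⟨x, hx, rfl⟩
    obtain ⟨t, ht, v, hv, rfl⟩ := (hKmem x).1 hx
    show Mx *ᵥ (t • v) ∈ K
    rw [Matrix.mulVec_smul]
    exact hKsm t ht _ (hMcvx v hv)
  -- conclusion
  refine ⟨Ω, hΩne, hΩopen, hΩconv, hΩsmul, hinter, ?_⟩
  intro g hg
  set A : Matrix (Fin d) (Fin d) ℝ := (g : Matrix (Fin d) (Fin d) ℝ) with hAdef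
  set B : Matrix (Fin d) (Fin d) ℝ := ((g⁻¹ : GL (Fin d) ℝ) : Matrix (Fin d) (Fin d) ℝ)
    with hBdef
  have hBA : ∀ v, B *ᵥ (A *ᵥ v) = v := by
    intro v
    rw [Matrix.mulVec_mulVec, hAdef, hBdef, ← Units.val_mul, inv_mul_cancel g,
      Units.val_one, Matrix.one_mulVec]
  have hAB : ∀ v, A *ᵥ (B *ᵥ v) = v := by
    intro v
    rw [Matrix.mulVec_mulVec, hAdef, hBdef, ← Units.val_mul, mul_inv_cancel g,
      Units.val_one, Matrix.one_mulVec]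
  have hAS : ∀ v ∈ C, A *ᵥ v ∈ scalarSaturation C := hgS g hg
  have hBS : ∀ v ∈ C, B *ᵥ v ∈ scalarSaturation C := hgS g⁻¹ (inv_mem hg)
  have hAne : ∀ v ∈ C, φ (A *ᵥ v) ≠ 0 := by
    intro v hv
    obtain ⟨t, ht0, w, hw, hEq⟩ := hAS v hv
    rw [hEq, φ.map_smul, hchart w hw, smul_eq_mul, mul_one]
    exact ht0
  -- continuity of v ↦ φ (A *ᵥ v)
  have hfc : Continuous fun v : Fin d → ℝ => φ (A *ᵥ v) := by
    have h1 : Continuous fun v : Fin d → ℝ => A *ᵥ v := by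
      have := (Matrix.mulVecLin A).continuous_of_finiteDimensional
      exact this
    exact φ.continuous_of_finiteDimensional.comp h1
  -- sign dichotomy
  have hsign : (∀ v ∈ C, 0 < φ (A *ᵥ v)) ∨ (∀ v ∈ C, φ (A *ᵥ v) < 0) := by
    by_contra hcon
    push_neg at hcon
    obtain ⟨⟨a, ha, ha'⟩, ⟨b, hb, hb'⟩⟩ := hcon
    have haneg : φ (A *ᵥ a) < 0 := lt_of_le_of_ne ha' (hAne a ha)
    have hbpos : 0 < φ (A *ᵥ b) := lt_of_le_of_ne hb' (Ne.symm (hAne b hb))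
    have himg : IsPreconnected ((fun v => φ (A *ᵥ v)) '' C) :=
      (hCconn.image _ hfc.continuousOn).isPreconnected
    have hoc := himg.ordConnected
    have h0mem : (0 : ℝ) ∈ (fun v => φ (A *ᵥ v)) '' C := by
      apply hoc.out ⟨a, ha, rfl⟩ ⟨b, hb, rfl⟩
      exact ⟨haneg.le, hbpos.le⟩
    obtain ⟨v, hv, hv0⟩ := h0mem
    exact hAne v hv hv0
  -- transfer the sign to the inverse
  have hBsign : ∀ (sgn : Bool),
      (∀ v ∈ C, if sgn then 0 < φ (A *ᵥ v) else φ (A *ᵥ v) < 0) →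
      (∀ w ∈ C, if sgn then 0 < φ (B *ᵥ w) else φ (B *ᵥ w) < 0) := by
    intro sgn hA' w hw
    obtain ⟨s, hs0, u, hu, hEq⟩ := hBS w hw
    have hφB : φ (B *ᵥ w) = s := by
      rw [hEq, φ.map_smul, hchart u hu, smul_eq_mul, mul_one]
    have hwval : w = s • (A *ᵥ u) := by
      rw [← hAB w, hEq, Matrix.mulVec_smul]
    have h1 : (1 : ℝ) = s * φ (A *ᵥ u) := by
      have := hchart w hw
      rw [hwval, φ.map_smul, smul_eq_mul] at this
      linarith
    have hAu := hA' u hu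
    cases sgn with
    | true =>
      norm_num at hAu ⊢
      rw [hφB]
      nlinarith
    | false =>
      norm_num at hAu ⊢
      rw [hφB]
      nlinarith
  -- image of interior
  have himgint : ∀ s : Set (Fin d → ℝ),
      (fun v => A *ᵥ v) '' interior s = interior ((fun v => A *ᵥ v) '' s) := by
    intro s
    have heq : (Matrix.mulVecLin A).comp (Matrix.mulVecLin B) = LinearMap.id := by
      apply LinearMap.ext
      intro v
      simp [Matrix.mulVecLin_apply, hAB v]
    have heq' : (Matrix.mulVecLin B).comp (Matrix.mulVecLin A) = LinearMap.id := by
      apply LinearMap.ext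
      intro v
      simp [Matrix.mulVecLin_apply, hBA v]
    let e : (Fin d → ℝ) ≃ₗ[ℝ] (Fin d → ℝ) :=
      LinearEquiv.ofLinear (Matrix.mulVecLin A) (Matrix.mulVecLin B) heq heq'
    exact e.toContinuousLinearEquiv.toHomeomorph.image_interior s
  have hIntNeg : interior (-K) = -interior K := by
    have h := (Homeomorph.neg (Fin d → ℝ)).preimage_interior K
    simpa [Set.neg_preimage] using h.symm
  rcases hsign with hpos | hneg
  · -- positive case : g '' Ω = Ω
    left
    have hBpos : ∀ w ∈ C, 0 < φ (B *ᵥ w) := by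
      have := hBsign true (by simpa using hpos)
      simpa using this
    have hAK : (fun v => A *ᵥ v) '' K ⊆ K := himgsub A hAS hpos
    have hBK : (fun v => B *ᵥ v) '' K ⊆ K := himgsub B hBS hBpos
    have hKeq : (fun v => A *ᵥ v) '' K = K := by
      apply Set.Subset.antisymm hAK
      intro x hx
      exact ⟨B *ᵥ x, hBK ⟨x, hx, rfl⟩, hAB x⟩
    rw [hΩdef, himgint K, hKeq]
  · -- negative case : g '' Ω = -Ω
    right
    have hBneg : ∀ w ∈ C, φ (B *ᵥ w) < 0 := by
      have := hBsign false (by simpa using hneg)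
      simpa using this
    have hA'S : ∀ v ∈ C, (-A) *ᵥ v ∈ scalarSaturation C := by
      intro v hv
      obtain ⟨t, ht0, w, hw, hEq⟩ := hAS v hv
      refine ⟨-t, neg_ne_zero.2 ht0, w, hw, ?_⟩
      rw [Matrix.neg_mulVec, hEq, neg_smul]
    have hA'pos : ∀ v ∈ C, 0 < φ ((-A) *ᵥ v) := by
      intro v hv
      rw [Matrix.neg_mulVec, φ.map_neg]
      linarith [hneg v hv]
    have hB'S : ∀ v ∈ C, (-B) *ᵥ v ∈ scalarSaturation C := by
      intro v hv
      obtain ⟨t, ht0, w, hw, hEq⟩ := hBS v hv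
      refine ⟨-t, neg_ne_zero.2 ht0, w, hw, ?_⟩
      rw [Matrix.neg_mulVec, hEq, neg_smul]
    have hB'pos : ∀ v ∈ C, 0 < φ ((-B) *ᵥ v) := by
      intro v hv
      rw [Matrix.neg_mulVec, φ.map_neg]
      linarith [hBneg v hv]
    have hA'K : (fun v => (-A) *ᵥ v) '' K ⊆ K := himgsub (-A) hA'S hA'pos
    have hB'K : (fun v => (-B) *ᵥ v) '' K ⊆ K := himgsub (-B) hB'S hB'pos
    have hKeq : (fun v => A *ᵥ v) '' K = -K := by
      apply Set.Subset.antisymm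
      · rintro _ ⟨x, hx, rfl⟩
        rw [Set.mem_neg, ← Matrix.neg_mulVec]
        exact hA'K ⟨x, hx, rfl⟩
      · intro x hx
        rw [Set.mem_neg] at hx
        refine ⟨B *ᵥ x, ?_, hAB x⟩
        have : (-B) *ᵥ (-x) ∈ K := hB'K ⟨-x, hx, rfl⟩
        rwa [Matrix.neg_mulVec, Matrix.mulVec_neg, neg_neg] at this
    rw [hΩdef, himgint K, hKeq, hIntNeg]
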